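/- The bilinear form 𝔅 is symmetric (𝔅(τ, σ) = 𝔅(σ, τ) for all σ, τ ∈ P) if m ≡ 0 or 3 (mod 4), and antisymmetric (𝔅(τ, σ) = −𝔅(σ, τ) for all σ, τ ∈ P) if m ≡ 1 or 2 (mod 4). -/

import Mathlib

noncomputable section

/-- The spinor space `P`: complex functions on subsets of `Fin m`
(the fermionic Fock model of the exterior algebra of `ℂ^m`). -/
abbrev SpinorSpace (m : ℕ) := Finset (Fin m) → ℂ

/-- The creation operator `c_j`. -/
def creation {m : ℕ} (j : Fin m) (f : SpinorSpace m) : SpinorSpace m := fun S =>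
  if j ∈ S then (-1 : ℂ) ^ (S.filter fun i => i < j).card * f (S.erase j) else 0

/-- The annihilation operator `a_j`. -/
def annihilation {m : ℕ} (j : Fin m) (f : SpinorSpace m) : SpinorSpace m := fun S =>
  if j ∈ S then 0 else (-1 : ℂ) ^ (S.filter fun i => i < j).card * f (insert j S)

/-- The gamma operators `Γ_I`, `I = 1, …, 2m`, here indexed by `Fin (2 * m)` (0-based):
`Γ_j = c_j + a_j` and `Γ_{m+j} = i (c_j − a_j)` for `j = 1, …, m`. -/
def gammaOp {m : ℕ} (I : Fin (2 * m)) (f : SpinorSpace m) : SpinorSpace m :=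
  if h : (I : ℕ) < m then
    creation ⟨(I : ℕ), h⟩ f + annihilation ⟨(I : ℕ), h⟩ f
  else
    Complex.I • (creation ⟨(I : ℕ) - m, by have := I.isLt; omega⟩ f
      - annihilation ⟨(I : ℕ) - m, by have := I.isLt; omega⟩ f)

/-- The Hermitian inner product `⟨f, g⟩ = Σ_S conj (f S) * g S` on the spinor space. -/
def herm {m : ℕ} (f g : SpinorSpace m) : ℂ :=
  ∑ S : Finset (Fin m), (starRingEnd ℂ) (f S) * g S

/-- The composition `Γ_{I₁} ∘ Γ_{I₂} ∘ ⋯ ∘ Γ_{I_k}` corresponding to a list of indices. -/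
def gammaProd {m : ℕ} (l : List (Fin (2 * m))) : SpinorSpace m → SpinorSpace m :=
  l.foldr (fun I F => gammaOp I ∘ F) id

/-- The conjugation operator `κ`. -/
def conjOp {m : ℕ} (f : SpinorSpace m) : SpinorSpace m := fun S => (starRingEnd ℂ) (f S)

/-- The conjugate-linear operator `A = Γ_1 ∘ Γ_2 ∘ ⋯ ∘ Γ_m ∘ κ`. -/
def opA (m : ℕ) : SpinorSpace m → SpinorSpace m :=
  gammaProd (List.ofFn fun j : Fin m =>
    (⟨(j : ℕ), by have := j.isLt; omega⟩ : Fin (2 * m))) ∘ conjOp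

/-- The conjugate-linear operator `B = Γ_{m+1} ∘ Γ_{m+2} ∘ ⋯ ∘ Γ_{2m} ∘ κ`. -/
def opB (m : ℕ) : SpinorSpace m → SpinorSpace m :=
  gammaProd (List.ofFn fun j : Fin m =>
    (⟨m + (j : ℕ), by have := j.isLt; omega⟩ : Fin (2 * m))) ∘ conjOp

/-- The bilinear form `𝔄(σ, τ) = ⟨A σ, τ⟩`. -/
def formA {m : ℕ} (σ τ : SpinorSpace m) : ℂ := herm (opA m σ) τ

/-- The bilinear form `𝔅(σ, τ) = ⟨B σ, τ⟩`. -/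
def formB {m : ℕ} (σ τ : SpinorSpace m) : ℂ := herm (opB m σ) τ




open Finset

/-- Toggle set: indices `≥ m - n`. -/
def Tset (m n : ℕ) : Finset (Fin m) := univ.filter (fun i => m - n ≤ (i : ℕ))

/-- Sign exponent. -/
def Eexp (m n : ℕ) (S : Finset (Fin m)) : ℕ :=
  n * (S.filter (fun i : Fin m => (i : ℕ) < m - n)).card
  + ∑ i ∈ univ.filter (fun i : Fin m => i ∉ S ∧ m - n ≤ (i : ℕ)), (m - (i : ℕ))

lemma gammaOp_high (m k : ℕ) (hk : k < m) (pf : m + k < 2 * m) (f : SpinorSpace m)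
    (S : Finset (Fin m)) :
    gammaOp (⟨m + k, pf⟩ : Fin (2 * m)) f S
      = Complex.I * (creation ⟨k, hk⟩ f S - annihilation ⟨k, hk⟩ f S) := by
  rw [gammaOp, dif_neg (by simp)]
  simp only [Fin.val_mk, Nat.add_sub_cancel_left, Pi.smul_apply, Pi.sub_apply, smul_eq_mul]

lemma gamma_formula (m : ℕ) : ∀ n (hn : n ≤ m) (g : SpinorSpace m) (S : Finset (Fin m)),
    gammaProd (List.ofFn fun j : Fin n =>
      (⟨m + (m - n) + (j : ℕ), by have := j.isLt; omega⟩ : Fin (2 * m))) g S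
    = Complex.I ^ n * (-1 : ℂ) ^ Eexp m n S * g (symmDiff S (Tset m n)) := by
  intro n
  induction n with
  | zero =>
    intro _ g S
    have hT : Tset m 0 = ∅ := by
      ext i
      have := i.isLt
      simp only [Tset, Nat.sub_zero, mem_filter, mem_univ, true_and,
        Finset.notMem_empty, iff_false]
      omega
    have hE : Eexp m 0 S = 0 := by
      have h0 : (univ.filter (fun i : Fin m => i ∉ S ∧ m - 0 ≤ (i : ℕ))) = ∅ := by
        ext i
        have := i.isLt
        simp only [Nat.sub_zero, mem_filter, mem_univ, true_and,
          Finset.notMem_empty, iff_false, not_and]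
        intro _
        omega
      simp [Eexp, h0]
    have hsd : symmDiff S (∅ : Finset (Fin m)) = S := by
      rw [← Finset.bot_eq_empty, symmDiff_bot]
    simp [gammaProd, hT, hE, hsd]
  | succ n ih =>
    intro hn g S
    have hklt : m - (n + 1) < m := by omega
    have hkpf : m + (m - (n + 1)) < 2 * m := by omega
    set kf : Fin m := ⟨m - (n + 1), hklt⟩ with hkf
    have hlist : (List.ofFn fun j : Fin (n+1) =>
        (⟨m + (m - (n+1)) + (j : ℕ), by have := j.isLt; omega⟩ : Fin (2 * m)))
        = (⟨m + (m - (n+1)), hkpf⟩ : Fin (2 * m)) ::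
          (List.ofFn fun j : Fin n =>
            (⟨m + (m - n) + (j : ℕ), by have := j.isLt; omega⟩ : Fin (2 * m))) := by
      rw [List.ofFn_succ]
      have htail : ∀ i : Fin n,
            (⟨m + (m - (n+1)) + ((Fin.succ i : Fin (n+1)) : ℕ),
              by have := i.isLt; omega⟩ : Fin (2 * m))
            = (⟨m + (m - n) + (i : ℕ), by have := i.isLt; omega⟩ : Fin (2 * m)) := by
        intro i
        apply Fin.ext
        simp only [Fin.val_mk, Fin.val_succ]
        omega
      exact congrArg₂ List.cons (Fin.ext (by simp)) (congrArg List.ofFn (funext htail))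
    rw [hlist]
    have hstep : gammaProd ((⟨m + (m - (n+1)), hkpf⟩ : Fin (2 * m)) ::
          (List.ofFn fun j : Fin n =>
            (⟨m + (m - n) + (j : ℕ), by have := j.isLt; omega⟩ : Fin (2 * m)))) g S
        = gammaOp (⟨m + (m - (n+1)), hkpf⟩ : Fin (2 * m))
            (gammaProd (List.ofFn fun j : Fin n =>
              (⟨m + (m - n) + (j : ℕ), by have := j.isLt; omega⟩ : Fin (2 * m))) g) S := rfl
    rw [hstep, gammaOp_high m (m - (n+1)) hklt hkpf]
    simp only [creation, annihilation, ← hkf]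
    by_cases hk : kf ∈ S
    · rw [if_pos hk, if_pos hk, sub_zero]
      rw [ih (by omega) g (S.erase kf)]
      have hset : symmDiff (S.erase kf) (Tset m n) = symmDiff S (Tset m (n + 1)) := by
        ext i
        by_cases hik : i = kf
        · subst hik
          simp [Finset.mem_symmDiff, Tset, (id hk : (⟨m - (n + 1), hklt⟩ : Fin m) ∈ S), hkf]
          omega
        · have hvi : (i : ℕ) ≠ m - (n + 1) := by
            simpa [hkf, Fin.ext_iff] using hik
          by_cases hiS : i ∈ S <;>
            simp [Finset.mem_symmDiff, Tset, hik, hiS, Finset.mem_erase] <;> omega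
      have hexp : Eexp m (n + 1) S
          = (S.filter (fun i => i < kf)).card + Eexp m n (S.erase kf) := by
        have p1 : S.filter (fun i => i < kf) = S.filter (fun i : Fin m => (i : ℕ) < m - (n+1)) := by
          ext i; simp [Fin.lt_def, hkf]
        have p2 : (S.erase kf).filter (fun i : Fin m => (i : ℕ) < m - n)
            = S.filter (fun i : Fin m => (i : ℕ) < m - (n+1)) := by
          ext i
          by_cases hik : i = kf
          · subst hik; simp [hk, hkf] <;> omega <;> omega
          · have hvi : (i : ℕ) ≠ m - (n + 1) := by simpa [hkf, Fin.ext_iff] using hik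
            by_cases hiS : i ∈ S <;> simp [hik, hiS, Finset.mem_erase] <;> omega
        have p3 : (univ.filter (fun i : Fin m => i ∉ S ∧ m - (n+1) ≤ (i : ℕ)))
            = (univ.filter (fun i : Fin m => i ∉ S.erase kf ∧ m - n ≤ (i : ℕ))) := by
          ext i
          by_cases hik : i = kf
          · subst hik; simp [(id hk : (⟨m - (n + 1), hklt⟩ : Fin m) ∈ S), hkf] <;> omega
          · have hvi : (i : ℕ) ≠ m - (n + 1) := by simpa [hkf, Fin.ext_iff] using hik
            by_cases hiS : i ∈ S <;> simp [hik, hiS, Finset.mem_erase] <;> omega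
        rw [Eexp, Eexp, p1, p2, p3]
        ring
      rw [hset, hexp]
      ring
    · rw [if_neg hk, if_neg hk, zero_sub]
      rw [ih (by omega) g (insert kf S)]
      have hset : symmDiff (insert kf S) (Tset m n) = symmDiff S (Tset m (n + 1)) := by
        ext i
        by_cases hik : i = kf
        · subst hik
          simp [Finset.mem_symmDiff, Tset, (id hk : (⟨m - (n + 1), hklt⟩ : Fin m) ∉ S), hkf]
          omega
        · have hvi : (i : ℕ) ≠ m - (n + 1) := by
            simpa [hkf, Fin.ext_iff] using hik
          by_cases hiS : i ∈ S <;>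
            simp [Finset.mem_symmDiff, Tset, hik, hiS, Finset.mem_insert] <;> omega
      have hexp : Eexp m (n + 1) S
          = (S.filter (fun i => i < kf)).card + 1 + Eexp m n (insert kf S) := by
        have p1 : S.filter (fun i => i < kf) = S.filter (fun i : Fin m => (i : ℕ) < m - (n+1)) := by
          ext i; simp [Fin.lt_def, hkf]
        have p2 : (insert kf S).filter (fun i : Fin m => (i : ℕ) < m - n)
            = insert kf (S.filter (fun i : Fin m => (i : ℕ) < m - (n+1))) := by
          ext i
          by_cases hik : i = kf
          · subst hik; simp [hkf] <;> omega
          · have hvi : (i : ℕ) ≠ m - (n + 1) := by simpa [hkf, Fin.ext_iff] using hik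
            by_cases hiS : i ∈ S <;> simp [hik, hiS, Finset.mem_insert] <;> omega
        have p2' : kf ∉ S.filter (fun i : Fin m => (i : ℕ) < m - (n+1)) := by
          simp [hk]
        have p3 : (univ.filter (fun i : Fin m => i ∉ S ∧ m - (n+1) ≤ (i : ℕ)))
            = insert kf (univ.filter
                (fun i : Fin m => i ∉ insert kf S ∧ m - n ≤ (i : ℕ))) := by
          ext i
          by_cases hik : i = kf
          · subst hik; simp [(id hk : (⟨m - (n + 1), hklt⟩ : Fin m) ∉ S), hkf] <;> omega
          · have hvi : (i : ℕ) ≠ m - (n + 1) := by simpa [hkf, Fin.ext_iff] using hik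
            by_cases hiS : i ∈ S <;> simp [hik, hiS, Finset.mem_insert] <;> omega
        have p3' : kf ∉ (univ.filter
            (fun i : Fin m => i ∉ insert kf S ∧ m - n ≤ (i : ℕ))) := by
          simp
        rw [Eexp, Eexp, p1, p2, Finset.card_insert_of_notMem p2', p3,
          Finset.sum_insert p3']
        have : m - (kf : ℕ) = n + 1 := by
          rw [hkf]
          simp only [Fin.val_mk]
          omega
        rw [this]
        ring
      rw [hset, hexp]
      ring

lemma Tset_eq_univ (m : ℕ) : Tset m m = univ := by
  ext i
  simp [Tset]

lemma Eexp_top (m : ℕ) (S : Finset (Fin m)) :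
    Eexp m m S = ∑ i ∈ Sᶜ, (m - (i : ℕ)) := by
  have h1 : (S.filter (fun i : Fin m => (i : ℕ) < m - m)) = ∅ := by
    ext i; simp
  have h2 : (univ.filter (fun i : Fin m => i ∉ S ∧ m - m ≤ (i : ℕ))) = Sᶜ := by
    ext i; simp [Finset.mem_compl]
  rw [Eexp, h1, h2]
  simp

lemma symmDiff_univ {m : ℕ} (S : Finset (Fin m)) : symmDiff S univ = Sᶜ := by
  ext i
  simp [Finset.mem_symmDiff]

lemma opB_apply (m : ℕ) (σ : SpinorSpace m) (S : Finset (Fin m)) :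
    opB m σ S = Complex.I ^ m * (-1 : ℂ) ^ Eexp m m S * (starRingEnd ℂ) (σ Sᶜ) := by
  have hlist : (List.ofFn fun j : Fin m =>
        (⟨m + (j : ℕ), by have := j.isLt; omega⟩ : Fin (2 * m)))
      = (List.ofFn fun j : Fin m =>
        (⟨m + (m - m) + (j : ℕ), by have := j.isLt; omega⟩ : Fin (2 * m))) := by
    refine congrArg List.ofFn (funext fun i => Fin.ext ?_)
    simp
  have : opB m σ S = gammaProd (List.ofFn fun j : Fin m =>
      (⟨m + (j : ℕ), by have := j.isLt; omega⟩ : Fin (2 * m))) (conjOp σ) S := rfl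
  rw [this, hlist, gamma_formula m m le_rfl (conjOp σ) S, Tset_eq_univ, symmDiff_univ]
  rfl

lemma sum_parity (m : ℕ) :
    ((∑ i ∈ Finset.range m, (i + 1)) % 2 = 0) ↔ (m % 4 = 0 ∨ m % 4 = 3) := by
  induction m with
  | zero => simp
  | succ n ih =>
    rw [Finset.sum_range_succ]
    omega

lemma total_parity (m : ℕ) :
    ((∑ i : Fin m, (m - (i : ℕ))) % 2 = 0) ↔ (m % 4 = 0 ∨ m % 4 = 3) := by
  have h1 : ∑ i : Fin m, (m - (i : ℕ)) = ∑ i ∈ Finset.range m, (m - i) :=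
    Fin.sum_univ_eq_sum_range _ m
  have h2 : ∑ i ∈ Finset.range m, (i + 1) = ∑ i ∈ Finset.range m, (m - i) := by
    rw [← Finset.sum_range_reflect]
    apply Finset.sum_congr rfl
    intro i hi
    rw [Finset.mem_range] at hi
    omega
  rw [h1, ← h2]
  exact sum_parity m

lemma Eexp_compl (m : ℕ) (S : Finset (Fin m)) :
    Eexp m m S + Eexp m m Sᶜ = ∑ i : Fin m, (m - (i : ℕ)) := by
  rw [Eexp_top, Eexp_top, compl_compl, add_comm]
  exact Finset.sum_add_sum_compl S _

lemma formB_eq (m : ℕ) (σ τ : SpinorSpace m) :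
    formB σ τ = ∑ S : Finset (Fin m),
      (starRingEnd ℂ) Complex.I ^ m * (-1 : ℂ) ^ Eexp m m S * σ Sᶜ * τ S := by
  rw [formB, herm]
  apply Finset.sum_congr rfl
  intro S _
  rw [opB_apply]
  simp only [map_mul, map_pow, map_neg, map_one, Complex.conj_conj]

/-- the bilinear form `𝔅` is symmetric if `m ≡ 0, 3 (mod 4)` and
antisymmetric if `m ≡ 1, 2 (mod 4)`. -/
theorem formB_symm_or_antisymm (m : ℕ) (hm : 1 ≤ m) :
    (m % 4 = 0 ∨ m % 4 = 3 → ∀ σ τ : SpinorSpace m, formB τ σ = formB σ τ) ∧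
    (m % 4 = 1 ∨ m % 4 = 2 → ∀ σ τ : SpinorSpace m, formB τ σ = -formB σ τ) := by
  set M := ∑ i : Fin m, (m - (i : ℕ)) with hM
  have e : Finset (Fin m) ≃ Finset (Fin m) :=
    Function.Involutive.toPerm compl compl_compl
  constructor
  · intro hmod σ τ
    have hMeven : M % 2 = 0 := (total_parity m).mpr hmod
    rw [formB_eq, formB_eq]
    apply Fintype.sum_equiv (Function.Involutive.toPerm (compl : Finset (Fin m) → Finset (Fin m)) compl_involutive)
    intro S
    simp only [Function.Involutive.coe_toPerm, compl_compl]
    have hc := Eexp_compl m S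
    rcases Nat.even_or_odd (Eexp m m S) with h | h
    · have h2 : Even (Eexp m m Sᶜ) := by
        rw [Nat.even_iff] at *
        omega
      rw [h.neg_one_pow, h2.neg_one_pow]
      ring
    · have h2 : Odd (Eexp m m Sᶜ) := by
        rw [Nat.odd_iff] at *
        omega
      rw [h.neg_one_pow, h2.neg_one_pow]
      ring
  · intro hmod σ τ
    have hModd : M % 2 = 1 := by
      have := (total_parity m)
      rw [← hM] at this
      omega
    rw [formB_eq, formB_eq, ← Finset.sum_neg_distrib]
    apply Fintype.sum_equiv (Function.Involutive.toPerm (compl : Finset (Fin m) → Finset (Fin m)) compl_involutive)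
    intro S
    simp only [Function.Involutive.coe_toPerm, compl_compl]
    have hc := Eexp_compl m S
    rcases Nat.even_or_odd (Eexp m m S) with h | h
    · have h2 : Odd (Eexp m m Sᶜ) := by
        rw [Nat.even_iff] at h
        rw [Nat.odd_iff]
        omega
      rw [h.neg_one_pow, h2.neg_one_pow]
      ring
    · have h2 : Even (Eexp m m Sᶜ) := by
        rw [Nat.odd_iff] at h
        rw [Nat.even_iff]
        omega
      rw [h.neg_one_pow, h2.neg_one_pow]
      ring
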